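/- arXiv:1509.06357 — 2 statements merged into one kernel-verified Lean document; each statement's English description precedes it below -/
import Mathlib

section
/- (Join rule.) Let k ≥ 1 and let the terminal graph (G,T) be the join of terminal graphs (G₁,T) and (G₂,T). Let (H₁,ℓ₁) = C^c_k(G₁,T) and (H₂,ℓ₂) = C^c_k(G₂,T). Define a labeled graph (H,ℓ) as follows: for every pair of nodes x of H₁ and y of H₂ with ℓ₁(x) = ℓ₂(y), H has a node (x,y) with label ℓ((x,y)) = ℓ₁(x); two distinct nodes (x,y) and (x',y') are adjacent if and only if xx' is an edge of H₁ and yy' is an edge of H₂. Then (H,ℓ) = C^c_k(G,T). Moreover, for every k-coloring γ of G, if x is the node of H₁ whose label component contains the restriction of γ to V(G₁), and y is the node of H₂ whose label component contains the restriction of γ to V(G₂), then (x,y) is the γ-node of C^c_k(G,T). -/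
open SimpleGraph

/-- A proper `k`-coloring of a graph. -/
def IsColoring {W : Type*} (G : SimpleGraph W) (k : ℕ) (α : W → Fin k) : Prop :=
  ∀ u v : W, G.Adj u v → α u ≠ α v

/-- The `k`-color graph `C_k(G)`: nodes are proper `k`-colorings of `G`,
two colorings being adjacent iff they differ on exactly one vertex. -/
def colorGraph {W : Type*} (G : SimpleGraph W) (k : ℕ) :
    SimpleGraph {α : W → Fin k // IsColoring G k α} where
  Adj α β := ∃! w, α.1 w ≠ β.1 w
  symm := by
    constructor
    rintro α β ⟨w, hw, hu⟩
    exact ⟨w, hw.symm, fun u hu' => hu u hu'.symm⟩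
  loopless := by
    constructor
    rintro α ⟨w, hw, -⟩
    exact hw rfl

/-- The subgraph of a labeled graph consisting of the edges between
equally labeled nodes. -/
def sameLabelSub {N L : Type*} (H : SimpleGraph N) (f : N → L) : SimpleGraph N where
  Adj x y := H.Adj x y ∧ f x = f y
  symm := ⟨fun _ _ h => ⟨h.1.symm, h.2.symm⟩⟩
  loopless := ⟨fun x h => H.loopless.irrefl x h.1⟩

/-- The quotient graph obtained from a labeled graph by contracting every
(maximal) connected set of equally labeled nodes (i.e. every label component)
into a single node. -/
def quotGraph {N L : Type*} (H : SimpleGraph N) (f : N → L) :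
    SimpleGraph (sameLabelSub H f).ConnectedComponent where
  Adj c d := c ≠ d ∧ ∃ a b, (sameLabelSub H f).connectedComponentMk a = c ∧
      (sameLabelSub H f).connectedComponentMk b = d ∧ H.Adj a b
  symm := by
    constructor
    rintro c d ⟨hne, a, b, ha, hb, hab⟩
    exact ⟨hne.symm, b, a, hb, ha, hab.symm⟩
  loopless := ⟨fun c h => h.1 rfl⟩

/-- The common label of a label component. -/
def quotLabel {N L : Type*} (H : SimpleGraph N) (f : N → L) :
    (sameLabelSub H f).ConnectedComponent → L :=
  SimpleGraph.ConnectedComponent.lift f (by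
    intro v w p hp
    clear hp
    induction p with
    | nil => rfl
    | cons h _ ih => exact (show _ ∧ _ from h).2.trans ih)

/-- The label of a coloring: its restriction to the terminal set `T`. -/
def csgLabelFun {W : Type*} (G : SimpleGraph W) (k : ℕ) (T : Set W) :
    {α : W → Fin k // IsColoring G k α} → (T → Fin k) :=
  fun α t => α.1 t.1

/-- The node set of the contracted solution graph: the label components. -/
abbrev CSGNode {W : Type*} (G : SimpleGraph W) (k : ℕ) (T : Set W) :=
  (sameLabelSub (colorGraph G k) (csgLabelFun G k T)).ConnectedComponent

/-- The contracted solution graph `C^c_k(G,T)`. -/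
def CSG {W : Type*} (G : SimpleGraph W) (k : ℕ) (T : Set W) : SimpleGraph (CSGNode G k T) :=
  quotGraph (colorGraph G k) (csgLabelFun G k T)

/-- The `γ`-node of the contracted solution graph: the label component containing `γ`. -/
def csgNode {W : Type*} (G : SimpleGraph W) (k : ℕ) (T : Set W)
    (γ : {α : W → Fin k // IsColoring G k α}) : CSGNode G k T :=
  (sameLabelSub (colorGraph G k) (csgLabelFun G k T)).connectedComponentMk γ

/-- The label of a node of the contracted solution graph: the common restriction
to `T` of its colorings. -/
def csgLabel {W : Type*} (G : SimpleGraph W) (k : ℕ) (T : Set W) :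
    CSGNode G k T → (T → Fin k) :=
  quotLabel (colorGraph G k) (csgLabelFun G k T)

/-- The restriction of a proper coloring to an induced subgraph. -/
def restrictColoring {W : Type*} (G : SimpleGraph W) (k : ℕ) (S : Set W)
    (γ : {α : W → Fin k // IsColoring G k α}) :
    {α : S → Fin k // IsColoring (G.induce S) k α} :=
  ⟨fun u => γ.1 u.1, fun u w h => γ.2 u.1 w.1 h⟩

/-- A graph is chordal if it contains no induced cycle of length greater than 3. -/
def Chordal {W : Type*} (G : SimpleGraph W) : Prop :=
  ∀ n : ℕ, 4 ≤ n → IsEmpty (SimpleGraph.cycleGraph n ↪g G)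

/-- `S` is a vertex cut: `G - S` is disconnected. -/
def IsVertexCut {W : Type*} (G : SimpleGraph W) (S : Set W) : Prop :=
  ¬ (G.induce Sᶜ).Preconnected

/-- `G` is `l`-connected. -/
def LConnected {W : Type*} (G : SimpleGraph W) (l : ℕ) : Prop :=
  G.Connected ∧ l + 1 ≤ Nat.card W ∧ ∀ S : Set W, IsVertexCut G S → l ≤ S.ncard

/-- A labeled graph `(H,ℓ)`, whose labels are `k`-colorings of the complete graph
on a vertex (type) `S`, is an `(|S|,k)`-color-complete graph. -/
def IsColorComplete {N S : Type*} (k : ℕ) (H : SimpleGraph N) (ℓ : N → S → Fin k) : Prop :=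
  (∀ x, Function.Injective (ℓ x)) ∧
  (∀ f : S → Fin k, Function.Injective f → ∃! x, ℓ x = f) ∧
  (∀ x y, H.Adj x y ↔ ∃! s, ℓ x s ≠ ℓ y s)

/-- The injective neighborhood property. -/
def INP {N L : Type*} (H : SimpleGraph N) (ℓ : N → L) : Prop :=
  ∀ u v w : N, H.Adj u v → H.Adj u w → v ≠ w → ℓ v ≠ ℓ w

/-- The weight `w(P)` of a walk `P` in a labeled graph: the sum over the vertices `x`
of `P` of the number of colors used by labels of neighbors of `x` in `P` but not by
the label of `x`. -/
noncomputable def walkWeight {N S : Type*} {k : ℕ} {G : SimpleGraph N} (ℓ : N → S → Fin k)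
    {a b : N} (P : G.Walk a b) : ℕ :=
  letI := Classical.decEq N
  ∑ x ∈ P.support.toFinset,
    ((⋃ y ∈ P.toSubgraph.neighborSet x, Set.range (ℓ y)) \ Set.range (ℓ x)).ncard

/-- The terminal set `T`, viewed as a set of vertices of the induced subgraph on `Vi`. -/
def Tsub {V : Type*} (Vi T : Set V) : Set ↥Vi := {u | u.1 ∈ T}

/-- Two nodes of `C^c_k(G₁,T)` and `C^c_k(G₂,T)` have the same label. -/
def joinCompat {V : Type*} (G : SimpleGraph V) (k : ℕ) (T V₁ V₂ : Set V)
    (h1 : T ⊆ V₁) (h2 : T ⊆ V₂)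
    (x : CSGNode (G.induce V₁) k (Tsub V₁ T)) (y : CSGNode (G.induce V₂) k (Tsub V₂ T)) :
    Prop :=
  ∀ (t : V) (ht : t ∈ T),
    csgLabel (G.induce V₁) k (Tsub V₁ T) x ⟨⟨t, h1 ht⟩, ht⟩ =
    csgLabel (G.induce V₂) k (Tsub V₂ T) y ⟨⟨t, h2 ht⟩, ht⟩

/-- The node set of the graph constructed in the join rule: pairs of nodes of
`C^c_k(G₁,T)` and `C^c_k(G₂,T)` with equal labels. -/
def JoinNode {V : Type*} (G : SimpleGraph V) (k : ℕ) (T V₁ V₂ : Set V)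
    (h1 : T ⊆ V₁) (h2 : T ⊆ V₂) :=
  {p : CSGNode (G.induce V₁) k (Tsub V₁ T) × CSGNode (G.induce V₂) k (Tsub V₂ T) //
    joinCompat G k T V₁ V₂ h1 h2 p.1 p.2}

/-- The graph constructed in the join rule: `(x,y)` and `(x',y')` are adjacent iff
`xx'` is an edge of `C^c_k(G₁,T)` and `yy'` is an edge of `C^c_k(G₂,T)`. -/
def joinGraph {V : Type*} (G : SimpleGraph V) (k : ℕ) (T V₁ V₂ : Set V)
    (h1 : T ⊆ V₁) (h2 : T ⊆ V₂) : SimpleGraph (JoinNode G k T V₁ V₂ h1 h2) where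
  Adj p q := (CSG (G.induce V₁) k (Tsub V₁ T)).Adj p.1.1 q.1.1 ∧
      (CSG (G.induce V₂) k (Tsub V₂ T)).Adj p.1.2 q.1.2
  symm := ⟨fun _ _ h => ⟨h.1.symm, h.2.symm⟩⟩
  loopless := ⟨fun p h => (CSG (G.induce V₁) k (Tsub V₁ T)).loopless.irrefl _ h.1⟩

section JoinAux

variable {V : Type} {k : ℕ} {T V₁ V₂ : Set V}

/-- Two colorings of the two parts agree on `T`. -/
def Agree (h1 : T ⊆ V₁) (h2 : T ⊆ V₂) (α : ↥V₁ → Fin k) (β : ↥V₂ → Fin k) : Prop :=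
  ∀ (t : V) (ht : t ∈ T), α ⟨t, h1 ht⟩ = β ⟨t, h2 ht⟩

lemma mem_V2_of_not_mem_V1 (hcup : V₁ ∪ V₂ = Set.univ) {v : V} (h : v ∉ V₁) : v ∈ V₂ := by
  have : v ∈ V₁ ∪ V₂ := hcup ▸ Set.mem_univ v
  exact this.resolve_left h

open Classical in
/-- Glue two colorings of the two parts. -/
noncomputable def glueFun (hcup : V₁ ∪ V₂ = Set.univ)
    (α : ↥V₁ → Fin k) (β : ↥V₂ → Fin k) : V → Fin k :=
  fun v => if h : v ∈ V₁ then α ⟨v, h⟩ else β ⟨v, mem_V2_of_not_mem_V1 hcup h⟩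

lemma glueFun_mem1 (hcup : V₁ ∪ V₂ = Set.univ)
    (α : ↥V₁ → Fin k) (β : ↥V₂ → Fin k) {v : V} (h : v ∈ V₁) :
    glueFun hcup α β v = α ⟨v, h⟩ := by
  simp only [glueFun]; rw [dif_pos h]

lemma glueFun_not_mem1 (hcup : V₁ ∪ V₂ = Set.univ)
    (α : ↥V₁ → Fin k) (β : ↥V₂ → Fin k) {v : V} (h : v ∉ V₁) :
    glueFun hcup α β v = β ⟨v, mem_V2_of_not_mem_V1 hcup h⟩ := by
  simp only [glueFun]; rw [dif_neg h]

lemma glueFun_mem2 {h1 : T ⊆ V₁} {h2 : T ⊆ V₂} (hcap : V₁ ∩ V₂ = T)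
    (hcup : V₁ ∪ V₂ = Set.univ) {α : ↥V₁ → Fin k} {β : ↥V₂ → Fin k}
    (hag : Agree h1 h2 α β) {v : V} (h : v ∈ V₂) :
    glueFun hcup α β v = β ⟨v, h⟩ := by
  by_cases hv : v ∈ V₁
  · have ht : v ∈ T := hcap ▸ Set.mem_inter hv h
    rw [glueFun_mem1 hcup α β hv]
    exact hag v ht
  · rw [glueFun_not_mem1 hcup α β hv]

lemma glue_proper {G : SimpleGraph V} {h1 : T ⊆ V₁} {h2 : T ⊆ V₂} (hcap : V₁ ∩ V₂ = T)
    (hcup : V₁ ∪ V₂ = Set.univ)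
    (hedge : ∀ u w : V, G.Adj u w → (u ∈ V₁ ∧ w ∈ V₁) ∨ (u ∈ V₂ ∧ w ∈ V₂))
    {α : ↥V₁ → Fin k} {β : ↥V₂ → Fin k}
    (hα : IsColoring (G.induce V₁) k α) (hβ : IsColoring (G.induce V₂) k β)
    (hag : Agree h1 h2 α β) :
    IsColoring G k (glueFun hcup α β) := by
  intro u w huw
  rcases hedge u w huw with ⟨hu, hw⟩ | ⟨hu, hw⟩
  · rw [glueFun_mem1 hcup α β hu, glueFun_mem1 hcup α β hw]
    exact hα ⟨u, hu⟩ ⟨w, hw⟩ huw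
  · rw [glueFun_mem2 hcap hcup hag hu, glueFun_mem2 hcap hcup hag hw]
    exact hβ ⟨u, hu⟩ ⟨w, hw⟩ huw

end JoinAux
section JoinAux2

variable {V : Type} {G : SimpleGraph V} {k : ℕ} {T V₁ V₂ : Set V}
  {h1 : T ⊆ V₁} {h2 : T ⊆ V₂}

/-- Transfer agreement along a label equality on the `V₁` side. -/
lemma agree_of_label_eq1 {α α' : {f : ↥V₁ → Fin k // IsColoring (G.induce V₁) k f}}
    {β : ↥V₂ → Fin k}
    (hl : csgLabelFun (G.induce V₁) k (Tsub V₁ T) α = csgLabelFun (G.induce V₁) k (Tsub V₁ T) α')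
    (hag : Agree h1 h2 α.1 β) : Agree h1 h2 α'.1 β := by
  intro t ht
  have h := congrFun hl ⟨⟨t, h1 ht⟩, ht⟩
  exact Eq.trans (Eq.symm h) (hag t ht)

/-- Transfer agreement along a label equality on the `V₂` side. -/
lemma agree_of_label_eq2 {β β' : {f : ↥V₂ → Fin k // IsColoring (G.induce V₂) k f}}
    {α : ↥V₁ → Fin k}
    (hl : csgLabelFun (G.induce V₂) k (Tsub V₂ T) β = csgLabelFun (G.induce V₂) k (Tsub V₂ T) β')
    (hag : Agree h1 h2 α β.1) : Agree h1 h2 α β'.1 := by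
  intro t ht
  have h := congrFun hl ⟨⟨t, h2 ht⟩, ht⟩
  exact Eq.trans (hag t ht) h

variable (hcap : V₁ ∩ V₂ = T) (hcup : V₁ ∪ V₂ = Set.univ)
  (hedge : ∀ u w : V, G.Adj u w → (u ∈ V₁ ∧ w ∈ V₁) ∨ (u ∈ V₂ ∧ w ∈ V₂))

/-- Gluing as a proper coloring of `G`. -/
noncomputable def glueCol
    (α : {f : ↥V₁ → Fin k // IsColoring (G.induce V₁) k f})
    (β : {f : ↥V₂ → Fin k // IsColoring (G.induce V₂) k f})
    (hag : Agree h1 h2 α.1 β.1) : {f : V → Fin k // IsColoring G k f} :=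
  ⟨glueFun hcup α.1 β.1, glue_proper hcap hcup hedge α.2 β.2 hag⟩

lemma step1 {α α' : {f : ↥V₁ → Fin k // IsColoring (G.induce V₁) k f}}
    (h : (sameLabelSub (colorGraph (G.induce V₁) k) (csgLabelFun (G.induce V₁) k (Tsub V₁ T))).Adj α α')
    {β : {f : ↥V₂ → Fin k // IsColoring (G.induce V₂) k f}}
    (hag : Agree h1 h2 α.1 β.1) (hag' : Agree h1 h2 α'.1 β.1) :
    (sameLabelSub (colorGraph G k) (csgLabelFun G k T)).Adj
      (glueCol hcap hcup hedge α β hag) (glueCol hcap hcup hedge α' β hag') := by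
  obtain ⟨⟨w, hw, huniq⟩, hlab⟩ := h
  constructor
  · refine ⟨w.1, ?_, ?_⟩
    · show glueFun hcup α.1 β.1 w.1 ≠ glueFun hcup α'.1 β.1 w.1
      rw [glueFun_mem1 hcup α.1 β.1 w.2, glueFun_mem1 hcup α'.1 β.1 w.2]
      exact hw
    · intro v hv
      replace hv : glueFun hcup α.1 β.1 v ≠ glueFun hcup α'.1 β.1 v := hv
      by_cases hv1 : v ∈ V₁
      · rw [glueFun_mem1 hcup α.1 β.1 hv1, glueFun_mem1 hcup α'.1 β.1 hv1] at hv
        exact congrArg Subtype.val (huniq ⟨v, hv1⟩ hv)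
      · exfalso
        rw [glueFun_not_mem1 hcup α.1 β.1 hv1, glueFun_not_mem1 hcup α'.1 β.1 hv1] at hv
        exact hv rfl
  · funext t
    have htT : t.1 ∈ T := t.2
    have h1t : t.1 ∈ V₁ := h1 htT
    show glueFun hcup α.1 β.1 t.1 = glueFun hcup α'.1 β.1 t.1
    rw [glueFun_mem1 hcup α.1 β.1 h1t, glueFun_mem1 hcup α'.1 β.1 h1t]
    exact congrFun hlab ⟨⟨t.1, h1t⟩, htT⟩

lemma step2 {β β' : {f : ↥V₂ → Fin k // IsColoring (G.induce V₂) k f}}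
    (h : (sameLabelSub (colorGraph (G.induce V₂) k) (csgLabelFun (G.induce V₂) k (Tsub V₂ T))).Adj β β')
    {α : {f : ↥V₁ → Fin k // IsColoring (G.induce V₁) k f}}
    (hag : Agree h1 h2 α.1 β.1) (hag' : Agree h1 h2 α.1 β'.1) :
    (sameLabelSub (colorGraph G k) (csgLabelFun G k T)).Adj
      (glueCol hcap hcup hedge α β hag) (glueCol hcap hcup hedge α β' hag') := by
  obtain ⟨⟨w, hw, huniq⟩, hlab⟩ := h
  have hwT : w.1 ∉ T := by
    intro hwT
    exact hw (congrFun hlab ⟨w, hwT⟩)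
  have hw1 : w.1 ∉ V₁ := fun hw1 => hwT (hcap ▸ Set.mem_inter hw1 w.2)
  constructor
  · refine ⟨w.1, ?_, ?_⟩
    · show glueFun hcup α.1 β.1 w.1 ≠ glueFun hcup α.1 β'.1 w.1
      rw [glueFun_mem2 hcap hcup hag w.2, glueFun_mem2 hcap hcup hag' w.2]
      exact hw
    · intro v hv
      replace hv : glueFun hcup α.1 β.1 v ≠ glueFun hcup α.1 β'.1 v := hv
      by_cases hv1 : v ∈ V₁
      · exfalso
        rw [glueFun_mem1 hcup α.1 β.1 hv1, glueFun_mem1 hcup α.1 β'.1 hv1] at hv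
        exact hv rfl
      · have hv2 : v ∈ V₂ := mem_V2_of_not_mem_V1 hcup hv1
        rw [glueFun_mem2 hcap hcup hag hv2, glueFun_mem2 hcap hcup hag' hv2] at hv
        exact congrArg Subtype.val (huniq ⟨v, hv2⟩ hv)
  · funext t
    have htT : t.1 ∈ T := t.2
    have h1t : t.1 ∈ V₁ := h1 htT
    show glueFun hcup α.1 β.1 t.1 = glueFun hcup α.1 β'.1 t.1
    rw [glueFun_mem1 hcup α.1 β.1 h1t, glueFun_mem1 hcup α.1 β'.1 h1t]

end JoinAux2
section JoinAux3

lemma label_eq_of_slReachable {N L : Type*} {H : SimpleGraph N} {f : N → L} {a b : N}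
    (h : (sameLabelSub H f).Reachable a b) : f a = f b :=
  congrArg (quotLabel H f) (SimpleGraph.ConnectedComponent.sound h)

variable {V : Type} {G : SimpleGraph V} {k : ℕ} {T V₁ V₂ : Set V}
  {h1 : T ⊆ V₁} {h2 : T ⊆ V₂}
  (hcap : V₁ ∩ V₂ = T) (hcup : V₁ ∪ V₂ = Set.univ)
  (hedge : ∀ u w : V, G.Adj u w → (u ∈ V₁ ∧ w ∈ V₁) ∨ (u ∈ V₂ ∧ w ∈ V₂))

lemma agree_self (h1 : T ⊆ V₁) (h2 : T ⊆ V₂) (γ : {f : V → Fin k // IsColoring G k f}) :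
    Agree h1 h2 (restrictColoring G k V₁ γ).1 (restrictColoring G k V₂ γ).1 :=
  fun _ _ => rfl

lemma restrict_glue1 (α : {f : ↥V₁ → Fin k // IsColoring (G.induce V₁) k f})
    (β : {f : ↥V₂ → Fin k // IsColoring (G.induce V₂) k f})
    (hag : Agree h1 h2 α.1 β.1) :
    restrictColoring G k V₁ (glueCol hcap hcup hedge α β hag) = α :=
  Subtype.ext (funext fun u => glueFun_mem1 hcup α.1 β.1 u.2)

lemma restrict_glue2 (α : {f : ↥V₁ → Fin k // IsColoring (G.induce V₁) k f})
    (β : {f : ↥V₂ → Fin k // IsColoring (G.induce V₂) k f})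
    (hag : Agree h1 h2 α.1 β.1) :
    restrictColoring G k V₂ (glueCol hcap hcup hedge α β hag) = β :=
  Subtype.ext (funext fun u => glueFun_mem2 hcap hcup hag u.2)

lemma glue_restrict (h1 : T ⊆ V₁) (h2 : T ⊆ V₂) (γ : {f : V → Fin k // IsColoring G k f}) :
    glueCol hcap hcup hedge (restrictColoring G k V₁ γ) (restrictColoring G k V₂ γ)
      (agree_self h1 h2 γ) = γ := by
  refine Subtype.ext (funext fun v => ?_)
  by_cases hv : v ∈ V₁
  · exact glueFun_mem1 hcup _ _ hv
  · exact glueFun_not_mem1 hcup _ _ hv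

lemma lift1 {α α' : {f : ↥V₁ → Fin k // IsColoring (G.induce V₁) k f}}
    (p : (sameLabelSub (colorGraph (G.induce V₁) k)
        (csgLabelFun (G.induce V₁) k (Tsub V₁ T))).Walk α α') :
    ∀ (β : {f : ↥V₂ → Fin k // IsColoring (G.induce V₂) k f})
      (hag : Agree h1 h2 α.1 β.1) (hag' : Agree h1 h2 α'.1 β.1),
      (sameLabelSub (colorGraph G k) (csgLabelFun G k T)).Reachable
        (glueCol hcap hcup hedge α β hag) (glueCol hcap hcup hedge α' β hag') := by
  induction p with
  | nil => exact fun β hag hag' => SimpleGraph.Reachable.refl _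
  | cons h q ih =>
    intro β hag hag'
    have hmid := agree_of_label_eq1 h.2 hag
    exact (step1 hcap hcup hedge h hag hmid).reachable.trans (ih β hmid hag')

lemma lift2 {β β' : {f : ↥V₂ → Fin k // IsColoring (G.induce V₂) k f}}
    (p : (sameLabelSub (colorGraph (G.induce V₂) k)
        (csgLabelFun (G.induce V₂) k (Tsub V₂ T))).Walk β β') :
    ∀ (α : {f : ↥V₁ → Fin k // IsColoring (G.induce V₁) k f})
      (hag : Agree h1 h2 α.1 β.1) (hag' : Agree h1 h2 α.1 β'.1),
      (sameLabelSub (colorGraph G k) (csgLabelFun G k T)).Reachable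
        (glueCol hcap hcup hedge α β hag) (glueCol hcap hcup hedge α β' hag') := by
  induction p with
  | nil => exact fun α hag hag' => SimpleGraph.Reachable.refl _
  | cons h q ih =>
    intro α hag hag'
    have hmid := agree_of_label_eq2 h.2 hag
    exact (step2 hcap hcup hedge h hag hmid).reachable.trans (ih α hmid hag')

lemma lift_both (hcap : V₁ ∩ V₂ = T) (hcup : V₁ ∪ V₂ = Set.univ)
    (hedge : ∀ u w : V, G.Adj u w → (u ∈ V₁ ∧ w ∈ V₁) ∨ (u ∈ V₂ ∧ w ∈ V₂))
    (h1 : T ⊆ V₁) (h2 : T ⊆ V₂) {γ δ : {f : V → Fin k // IsColoring G k f}}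
    (r1 : (sameLabelSub (colorGraph (G.induce V₁) k)
        (csgLabelFun (G.induce V₁) k (Tsub V₁ T))).Reachable
        (restrictColoring G k V₁ γ) (restrictColoring G k V₁ δ))
    (r2 : (sameLabelSub (colorGraph (G.induce V₂) k)
        (csgLabelFun (G.induce V₂) k (Tsub V₂ T))).Reachable
        (restrictColoring G k V₂ γ) (restrictColoring G k V₂ δ)) :
    (sameLabelSub (colorGraph G k) (csgLabelFun G k T)).Reachable γ δ := by
  obtain ⟨p1⟩ := r1
  obtain ⟨p2⟩ := r2
  have hagγ := agree_self (G := G) h1 h2 γ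
  have hagδ := agree_self (G := G) h1 h2 δ
  have hmix : Agree h1 h2 (restrictColoring G k V₁ δ).1 (restrictColoring G k V₂ γ).1 :=
    agree_of_label_eq1 (label_eq_of_slReachable ⟨p1⟩) hagγ
  have R1 := lift1 hcap hcup hedge p1 (restrictColoring G k V₂ γ) hagγ hmix
  have R2 := lift2 hcap hcup hedge p2 (restrictColoring G k V₁ δ) hmix hagδ
  have e1 := glue_restrict hcap hcup hedge h1 h2 γ
  have e2 := glue_restrict hcap hcup hedge h1 h2 δ
  rw [e1] at R1
  rw [e2] at R2
  exact R1.trans R2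

end JoinAux3
section JoinAux4

variable {V : Type} {G : SimpleGraph V} {k : ℕ} {T V₁ V₂ : Set V}

/-- Restrictions of adjacent same-label colorings lie in the same label components. -/
lemma restrict_comp_eq (hcap : V₁ ∩ V₂ = T) (hcup : V₁ ∪ V₂ = Set.univ)
    {γ δ : {f : V → Fin k // IsColoring G k f}}
    (h : (sameLabelSub (colorGraph G k) (csgLabelFun G k T)).Adj γ δ) :
    csgNode (G.induce V₁) k (Tsub V₁ T) (restrictColoring G k V₁ γ) =
      csgNode (G.induce V₁) k (Tsub V₁ T) (restrictColoring G k V₁ δ) ∧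
    csgNode (G.induce V₂) k (Tsub V₂ T) (restrictColoring G k V₂ γ) =
      csgNode (G.induce V₂) k (Tsub V₂ T) (restrictColoring G k V₂ δ) := by
  obtain ⟨⟨w, hw, huniq⟩, hlab⟩ := h
  have hwT : w ∉ T := fun hwT => hw (congrFun hlab ⟨w, hwT⟩)
  by_cases hw1 : w ∈ V₁
  · have hw2 : w ∉ V₂ := fun hw2 => hwT (hcap ▸ Set.mem_inter hw1 hw2)
    constructor
    · refine SimpleGraph.ConnectedComponent.sound ?_
      refine SimpleGraph.Adj.reachable ⟨⟨⟨w, hw1⟩, hw, fun u hu => Subtype.ext (huniq u.1 hu)⟩, ?_⟩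
      funext t
      show γ.1 t.1.1 = δ.1 t.1.1
      by_contra hne
      exact hwT (huniq t.1.1 hne ▸ t.2)
    · have : restrictColoring G k V₂ γ = restrictColoring G k V₂ δ := by
        refine Subtype.ext (funext fun u => ?_)
        by_contra hne
        exact hw2 (huniq u.1 hne ▸ u.2)
      rw [this]
  · have hw2 : w ∈ V₂ := mem_V2_of_not_mem_V1 hcup hw1
    constructor
    · have : restrictColoring G k V₁ γ = restrictColoring G k V₁ δ := by
        refine Subtype.ext (funext fun u => ?_)
        by_contra hne
        exact hw1 (huniq u.1 hne ▸ u.2)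
      rw [this]
    · refine SimpleGraph.ConnectedComponent.sound ?_
      refine SimpleGraph.Adj.reachable ⟨⟨⟨w, hw2⟩, hw, fun u hu => Subtype.ext (huniq u.1 hu)⟩, ?_⟩
      funext t
      show γ.1 t.1.1 = δ.1 t.1.1
      by_contra hne
      exact hwT (huniq t.1.1 hne ▸ t.2)

variable (G k T V₁ V₂) in
/-- The pair of label components of the two restrictions of a coloring. -/
noncomputable def psiFun (h1 : T ⊆ V₁) (h2 : T ⊆ V₂)
    (γ : {f : V → Fin k // IsColoring G k f}) : JoinNode G k T V₁ V₂ h1 h2 :=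
  ⟨(csgNode (G.induce V₁) k (Tsub V₁ T) (restrictColoring G k V₁ γ),
    csgNode (G.induce V₂) k (Tsub V₂ T) (restrictColoring G k V₂ γ)),
   fun t ht => rfl⟩

variable (G k T V₁ V₂) in
/-- The canonical map from `C^c_k(G,T)` to the join construction. -/
noncomputable def psi (h1 : T ⊆ V₁) (h2 : T ⊆ V₂)
    (hcap : V₁ ∩ V₂ = T) (hcup : V₁ ∪ V₂ = Set.univ) :
    CSGNode G k T → JoinNode G k T V₁ V₂ h1 h2 :=
  SimpleGraph.ConnectedComponent.lift (psiFun G k T V₁ V₂ h1 h2) (by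
    intro γ δ p hp
    clear hp
    induction p with
    | nil => rfl
    | cons h q ih =>
      refine Eq.trans ?_ ih
      obtain ⟨e1, e2⟩ := restrict_comp_eq hcap hcup h
      exact Subtype.ext (Prod.ext e1 e2))

variable {h1 : T ⊆ V₁} {h2 : T ⊆ V₂} {hcap : V₁ ∩ V₂ = T} {hcup : V₁ ∪ V₂ = Set.univ}

lemma psi_mk (γ : {f : V → Fin k // IsColoring G k f}) :
    psi G k T V₁ V₂ h1 h2 hcap hcup (csgNode G k T γ) = psiFun G k T V₁ V₂ h1 h2 γ := rfl

lemma psi_inj (hedge : ∀ u w : V, G.Adj u w → (u ∈ V₁ ∧ w ∈ V₁) ∨ (u ∈ V₂ ∧ w ∈ V₂)) :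
    Function.Injective (psi G k T V₁ V₂ h1 h2 hcap hcup) := by
  intro c d h
  revert h
  refine SimpleGraph.ConnectedComponent.ind₂ ?_ c d
  intro γ δ h
  have e1 : csgNode (G.induce V₁) k (Tsub V₁ T) (restrictColoring G k V₁ γ) =
      csgNode (G.induce V₁) k (Tsub V₁ T) (restrictColoring G k V₁ δ) :=
    congrArg (fun p => p.1.1) h
  have e2 : csgNode (G.induce V₂) k (Tsub V₂ T) (restrictColoring G k V₂ γ) =
      csgNode (G.induce V₂) k (Tsub V₂ T) (restrictColoring G k V₂ δ) :=
    congrArg (fun p => p.1.2) h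
  exact SimpleGraph.ConnectedComponent.sound
    (lift_both hcap hcup hedge h1 h2
      (SimpleGraph.ConnectedComponent.exact e1) (SimpleGraph.ConnectedComponent.exact e2))

lemma agree_of_compat {x : CSGNode (G.induce V₁) k (Tsub V₁ T)}
    {y : CSGNode (G.induce V₂) k (Tsub V₂ T)}
    (hc : joinCompat G k T V₁ V₂ h1 h2 x y)
    {α : {f : ↥V₁ → Fin k // IsColoring (G.induce V₁) k f}}
    {β : {f : ↥V₂ → Fin k // IsColoring (G.induce V₂) k f}}
    (hx : csgNode (G.induce V₁) k (Tsub V₁ T) α = x)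
    (hy : csgNode (G.induce V₂) k (Tsub V₂ T) β = y) :
    Agree h1 h2 α.1 β.1 := by
  intro t ht
  have := hc t ht
  rw [← hx, ← hy] at this
  exact this

lemma psi_surj (hedge : ∀ u w : V, G.Adj u w → (u ∈ V₁ ∧ w ∈ V₁) ∨ (u ∈ V₂ ∧ w ∈ V₂)) :
    Function.Surjective (psi G k T V₁ V₂ h1 h2 hcap hcup) := by
  intro p
  obtain ⟨α, hα⟩ := Quot.exists_rep p.1.1
  obtain ⟨β, hβ⟩ := Quot.exists_rep p.1.2
  have hα : csgNode (G.induce V₁) k (Tsub V₁ T) α = p.1.1 := hα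
  have hβ : csgNode (G.induce V₂) k (Tsub V₂ T) β = p.1.2 := hβ
  have hag : Agree h1 h2 α.1 β.1 := agree_of_compat p.2 hα hβ
  refine ⟨csgNode G k T (glueCol hcap hcup hedge α β hag), ?_⟩
  rw [psi_mk]
  refine Subtype.ext (Prod.ext ?_ ?_)
  · show csgNode (G.induce V₁) k (Tsub V₁ T)
      (restrictColoring G k V₁ (glueCol hcap hcup hedge α β hag)) = p.1.1
    rw [restrict_glue1 hcap hcup hedge α β hag]
    exact hα
  · show csgNode (G.induce V₂) k (Tsub V₂ T)
      (restrictColoring G k V₂ (glueCol hcap hcup hedge α β hag)) = p.1.2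
    rw [restrict_glue2 hcap hcup hedge α β hag]
    exact hβ

end JoinAux4
section JoinAux5

variable {V : Type} {G : SimpleGraph V} {k : ℕ} {T V₁ V₂ : Set V}
  {h1 : T ⊆ V₁} {h2 : T ⊆ V₂} {hcap : V₁ ∩ V₂ = T} {hcup : V₁ ∪ V₂ = Set.univ}

lemma adj_forward (hedge : ∀ u w : V, G.Adj u w → (u ∈ V₁ ∧ w ∈ V₁) ∨ (u ∈ V₂ ∧ w ∈ V₂))
    {c d : CSGNode G k T} (h : (CSG G k T).Adj c d) :
    (joinGraph G k T V₁ V₂ h1 h2).Adj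
      (psi G k T V₁ V₂ h1 h2 hcap hcup c) (psi G k T V₁ V₂ h1 h2 hcap hcup d) := by
  obtain ⟨hne, γ, δ, hγ, hδ, hadj⟩ := h
  subst hγ; subst hδ
  obtain ⟨w, hw, huniq⟩ := hadj
  have hwT : w ∈ T := by
    by_contra hwT
    refine hne (SimpleGraph.ConnectedComponent.sound (SimpleGraph.Adj.reachable ⟨⟨w, hw, huniq⟩, ?_⟩))
    funext t
    show γ.1 t.1 = δ.1 t.1
    by_contra hne'
    exact hwT (huniq t.1 hne' ▸ t.2)
  constructor
  · refine ⟨?_, restrictColoring G k V₁ γ, restrictColoring G k V₁ δ, rfl, rfl,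
      ⟨⟨w, h1 hwT⟩, hw, fun u hu => Subtype.ext (huniq u.1 hu)⟩⟩
    intro he
    exact hw (congrFun (congrArg (csgLabel (G.induce V₁) k (Tsub V₁ T)) he) ⟨⟨w, h1 hwT⟩, hwT⟩)
  · refine ⟨?_, restrictColoring G k V₂ γ, restrictColoring G k V₂ δ, rfl, rfl,
      ⟨⟨w, h2 hwT⟩, hw, fun u hu => Subtype.ext (huniq u.1 hu)⟩⟩
    intro he
    exact hw (congrFun (congrArg (csgLabel (G.induce V₂) k (Tsub V₂ T)) he) ⟨⟨w, h2 hwT⟩, hwT⟩)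

lemma adj_backward (hedge : ∀ u w : V, G.Adj u w → (u ∈ V₁ ∧ w ∈ V₁) ∨ (u ∈ V₂ ∧ w ∈ V₂))
    {c d : CSGNode G k T}
    (h : (joinGraph G k T V₁ V₂ h1 h2).Adj
      (psi G k T V₁ V₂ h1 h2 hcap hcup c) (psi G k T V₁ V₂ h1 h2 hcap hcup d)) :
    (CSG G k T).Adj c d := by
  obtain ⟨⟨hne1, a, b, ha, hb, hab⟩, ⟨hne2, β, β', hβ, hβ', hbb⟩⟩ := h
  obtain ⟨u, hu, huniq⟩ := hab
  obtain ⟨u', hu', huniq'⟩ := hbb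
  have huT : u.1 ∈ T := by
    by_contra huT
    refine hne1 ?_
    rw [← ha, ← hb]
    refine SimpleGraph.ConnectedComponent.sound (SimpleGraph.Adj.reachable ⟨⟨u, hu, huniq⟩, ?_⟩)
    funext t
    show a.1 t.1 = b.1 t.1
    by_contra hne'
    exact huT (huniq t.1 hne' ▸ t.2)
  have hu'T : u'.1 ∈ T := by
    by_contra hu'T
    refine hne2 ?_
    rw [← hβ, ← hβ']
    refine SimpleGraph.ConnectedComponent.sound (SimpleGraph.Adj.reachable ⟨⟨u', hu', huniq'⟩, ?_⟩)
    funext t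
    show β.1 t.1 = β'.1 t.1
    by_contra hne'
    exact hu'T (huniq' t.1 hne' ▸ t.2)
  have hagc : Agree h1 h2 a.1 β.1 := agree_of_compat (psi G k T V₁ V₂ h1 h2 hcap hcup c).2 ha hβ
  have hagd : Agree h1 h2 b.1 β'.1 := agree_of_compat (psi G k T V₁ V₂ h1 h2 hcap hcup d).2 hb hβ'
  have hkey : u'.1 = u.1 := by
    have h3 : a.1 ⟨u'.1, h1 hu'T⟩ ≠ b.1 ⟨u'.1, h1 hu'T⟩ := by
      rw [hagc u'.1 hu'T, hagd u'.1 hu'T]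
      intro hh
      exact hu' hh
    exact congrArg Subtype.val (huniq ⟨u'.1, h1 hu'T⟩ h3)
  have hadjg : (colorGraph G k).Adj (glueCol hcap hcup hedge a β hagc)
      (glueCol hcap hcup hedge b β' hagd) := by
    refine ⟨u.1, ?_, ?_⟩
    · show glueFun hcup a.1 β.1 u.1 ≠ glueFun hcup b.1 β'.1 u.1
      rw [glueFun_mem1 hcup a.1 β.1 u.2, glueFun_mem1 hcup b.1 β'.1 u.2]
      exact hu
    · intro v hv
      replace hv : glueFun hcup a.1 β.1 v ≠ glueFun hcup b.1 β'.1 v := hv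
      by_cases hv1 : v ∈ V₁
      · rw [glueFun_mem1 hcup a.1 β.1 hv1, glueFun_mem1 hcup b.1 β'.1 hv1] at hv
        exact congrArg Subtype.val (huniq ⟨v, hv1⟩ hv)
      · have hv2 : v ∈ V₂ := mem_V2_of_not_mem_V1 hcup hv1
        rw [glueFun_mem2 hcap hcup hagc hv2, glueFun_mem2 hcap hcup hagd hv2] at hv
        exact (congrArg Subtype.val (huniq' ⟨v, hv2⟩ hv)).trans hkey
  have hγc : csgNode G k T (glueCol hcap hcup hedge a β hagc) = c := by
    refine psi_inj (h1 := h1) (h2 := h2) (hcap := hcap) (hcup := hcup) hedge ?_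
    rw [psi_mk]
    refine Subtype.ext (Prod.ext ?_ ?_)
    · show csgNode (G.induce V₁) k (Tsub V₁ T)
        (restrictColoring G k V₁ (glueCol hcap hcup hedge a β hagc)) = _
      rw [restrict_glue1 hcap hcup hedge a β hagc]
      exact ha
    · show csgNode (G.induce V₂) k (Tsub V₂ T)
        (restrictColoring G k V₂ (glueCol hcap hcup hedge a β hagc)) = _
      rw [restrict_glue2 hcap hcup hedge a β hagc]
      exact hβ
  have hδd : csgNode G k T (glueCol hcap hcup hedge b β' hagd) = d := by
    refine psi_inj (h1 := h1) (h2 := h2) (hcap := hcap) (hcup := hcup) hedge ?_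
    rw [psi_mk]
    refine Subtype.ext (Prod.ext ?_ ?_)
    · show csgNode (G.induce V₁) k (Tsub V₁ T)
        (restrictColoring G k V₁ (glueCol hcap hcup hedge b β' hagd)) = _
      rw [restrict_glue1 hcap hcup hedge b β' hagd]
      exact hb
    · show csgNode (G.induce V₂) k (Tsub V₂ T)
        (restrictColoring G k V₂ (glueCol hcap hcup hedge b β' hagd)) = _
      rw [restrict_glue2 hcap hcup hedge b β' hagd]
      exact hβ'
  refine ⟨?_, _, _, hγc, hδd, hadjg⟩
  intro he
  exact hne1 (he ▸ rfl)

end JoinAux5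
/-- Join rule: if `(G,T)` is the join of `(G₁,T)` and `(G₂,T)`, then the
graph constructed in the join rule is (label-preserving isomorphic to) `C^c_k(G,T)`,
and the node `(x,y)` built from the nodes of the restrictions of `γ` corresponds to
the `γ`-node of `C^c_k(G,T)`. -/
theorem statement_4 {V : Type} [Fintype V] [DecidableEq V]
    (G : SimpleGraph V) (k : ℕ) (hk : 1 ≤ k) (T V₁ V₂ : Set V)
    (h1 : T ⊆ V₁) (h2 : T ⊆ V₂)
    (hcap : V₁ ∩ V₂ = T) (hcup : V₁ ∪ V₂ = Set.univ)
    (hne1 : V₁ ≠ T) (hne2 : V₂ ≠ T)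
    (hedge : ∀ u w : V, G.Adj u w → (u ∈ V₁ ∧ w ∈ V₁) ∨ (u ∈ V₂ ∧ w ∈ V₂)) :
    ∃ φ : joinGraph G k T V₁ V₂ h1 h2 ≃g CSG G k T,
      (∀ (p : JoinNode G k T V₁ V₂ h1 h2) (t : V) (ht : t ∈ T),
        csgLabel G k T (φ p) ⟨t, ht⟩ =
          csgLabel (G.induce V₁) k (Tsub V₁ T) p.1.1 ⟨⟨t, h1 ht⟩, ht⟩) ∧
      (∀ (γ : {f : V → Fin k // IsColoring G k f}) (p : JoinNode G k T V₁ V₂ h1 h2),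
        p.1.1 = csgNode (G.induce V₁) k (Tsub V₁ T) (restrictColoring G k V₁ γ) →
        p.1.2 = csgNode (G.induce V₂) k (Tsub V₂ T) (restrictColoring G k V₂ γ) →
        φ p = csgNode G k T γ) := by
  classical
  have hbij : Function.Bijective (psi G k T V₁ V₂ h1 h2 hcap hcup) :=
    ⟨psi_inj (h1 := h1) (h2 := h2) (hcap := hcap) (hcup := hcup) hedge,
     psi_surj (h1 := h1) (h2 := h2) (hcap := hcap) (hcup := hcup) hedge⟩
  let e : CSGNode G k T ≃ JoinNode G k T V₁ V₂ h1 h2 := Equiv.ofBijective _ hbij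
  have hpe : ∀ p, psi G k T V₁ V₂ h1 h2 hcap hcup (e.symm p) = p := fun p =>
    e.apply_symm_apply p
  refine ⟨⟨e.symm, ?_⟩, ?_, ?_⟩
  · intro p q
    constructor
    · intro h
      have h2' := adj_forward (h1 := h1) (h2 := h2) (hcap := hcap) (hcup := hcup) hedge h
      rw [hpe, hpe] at h2'
      exact h2'
    · intro h
      refine adj_backward (h1 := h1) (h2 := h2) (hcap := hcap) (hcup := hcup) hedge ?_
      rw [hpe, hpe]
      exact h
  · intro p t ht
    have claim : ∀ (c : CSGNode G k T),
        csgLabel G k T c ⟨t, ht⟩ =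
          csgLabel (G.induce V₁) k (Tsub V₁ T)
            (psi G k T V₁ V₂ h1 h2 hcap hcup c).1.1 ⟨⟨t, h1 ht⟩, ht⟩ := by
      refine SimpleGraph.ConnectedComponent.ind ?_
      intro γ
      rfl
    have := claim (e.symm p)
    rw [hpe] at this
    exact this
  · intro γ p hp1 hp2
    have hpp : e (csgNode G k T γ) = p := by
      refine Subtype.ext (Prod.ext ?_ ?_)
      · exact hp1.symm
      · exact hp2.symm
    show e.symm p = csgNode G k T γ
    rw [← hpp, Equiv.symm_apply_apply]
end

section
/- Let ℓ ≥ 1, let G be an ℓ-connected chordal graph, and let T be a clique of G with T ≠ V(G). (i) If (G,T) can be obtained from (G−v, T∖{v}) by an introduce operation, then |T| ≥ ℓ+1 and G−v is ℓ-connected. (ii) If (G,T) can be obtained from (G₁,T) and (G₂,T) by a join operation, then |T| ≥ ℓ and both G₁ and G₂ are ℓ-connected. -/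
open SimpleGraph

/-- The vertex set of `G - v`. -/
def delSet {V : Type*} (v : V) : Set V := {u | u ≠ v}

/-- The terminal set `T \ {v}`, viewed as a set of vertices of `G - v`. -/
def Tdel {V : Type*} (T : Set V) (v : V) : Set ↥(delSet v) := {u | u.1 ∈ T}


section Helpers

private def indHom {V : Type} (G : SimpleGraph V) {A B : Set V} (h : A ⊆ B) :
    G.induce A →g G.induce B := ⟨fun x => ⟨x.1, h x.2⟩, fun {_ _} hadj => hadj⟩

private def indHomV {V : Type} (G : SimpleGraph V) (A : Set V) :
    G.induce A →g G := ⟨Subtype.val, fun {_ _} h => h⟩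

private lemma reroute1 {V : Type} {G : SimpleGraph V} {v : V}
    (hclq : ∀ x y, G.Adj v x → G.Adj v y → x ≠ y → G.Adj x y)
    {B : Set V} (hvB : v ∉ B) :
    ∀ {a b : V} (p : G.Walk a b), (∀ x ∈ p.support, x ∈ B ∨ x = v) → ∀ hb : b ∈ B,
      (∀ ha : a ∈ B, (G.induce B).Reachable ⟨a, ha⟩ ⟨b, hb⟩) ∧
      (a = v → ∀ x, ∀ hx : x ∈ B, G.Adj v x → (G.induce B).Reachable ⟨x, hx⟩ ⟨b, hb⟩) := by
  intro a b p
  induction p with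
  | nil =>
    intro _ hb
    exact ⟨fun ha => Reachable.refl _, fun hav => absurd (hav ▸ hb) hvB⟩
  | @cons a c b h p ih =>
    intro hsupp hb
    have hc : c ∈ B ∨ c = v := hsupp c (by simp [SimpleGraph.Walk.support_cons])
    have hsupp' : ∀ x ∈ p.support, x ∈ B ∨ x = v := fun x hx =>
      hsupp x (by simp [SimpleGraph.Walk.support_cons, hx])
    have IH := ih hsupp' hb
    constructor
    · intro ha
      rcases hc with hcB | hcv
      · exact (SimpleGraph.Adj.reachable
          (by exact h : (G.induce B).Adj ⟨a, ha⟩ ⟨c, hcB⟩)).trans (IH.1 hcB)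
      · subst hcv
        exact IH.2 rfl a ha h.symm
    · intro hav
      subst hav
      have hcv : c ≠ a := fun e => G.loopless.irrefl a (e ▸ h)
      have hcB : c ∈ B := hc.resolve_right hcv
      intro x hx hadj
      by_cases hxc : x = c
      · subst hxc; exact IH.1 hx
      · exact (SimpleGraph.Adj.reachable
          (by exact hclq x c hadj h hxc : (G.induce B).Adj ⟨x, hx⟩ ⟨c, hcB⟩)).trans (IH.1 hcB)

private lemma reroute2 {V : Type} {G : SimpleGraph V} {V₁ V₂ : Set V}
    (hsplit : ∀ u w, G.Adj u w → (u ∈ V₁ ∧ w ∈ V₁) ∨ (u ∈ V₂ ∧ w ∈ V₂))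
    (hclq : G.IsClique (V₁ ∩ V₂))
    {B : Set V} :
    ∀ {a b : V} (p : G.Walk a b), (∀ x ∈ p.support, x ∈ B) → ∀ hb : b ∈ B ∩ V₁,
      (∀ ha : a ∈ B ∩ V₁, (G.induce (B ∩ V₁)).Reachable ⟨a, ha⟩ ⟨b, hb⟩) ∧
      (a ∉ V₁ → ∃ t, ∃ ht : t ∈ B ∩ V₁, t ∈ V₂ ∧
        (G.induce (B ∩ V₁)).Reachable ⟨t, ht⟩ ⟨b, hb⟩) := by
  intro a b p
  induction p with
  | nil =>
    intro _ hb
    exact ⟨fun ha => Reachable.refl _, fun hav => absurd hb.2 hav⟩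
  | @cons a c b h p ih =>
    intro hsupp hb
    have hcB : c ∈ B := hsupp c (by simp [SimpleGraph.Walk.support_cons])
    have hsupp' : ∀ x ∈ p.support, x ∈ B := fun x hx =>
      hsupp x (by simp [SimpleGraph.Walk.support_cons, hx])
    have IH := ih hsupp' hb
    constructor
    · intro ha
      by_cases hc1 : c ∈ V₁
      · exact (SimpleGraph.Adj.reachable
          (by exact h : (G.induce (B ∩ V₁)).Adj ⟨a, ha⟩ ⟨c, ⟨hcB, hc1⟩⟩)).trans
            (IH.1 ⟨hcB, hc1⟩)
      · have ha2 : a ∈ V₂ := ((hsplit a c h).resolve_left (fun q => hc1 q.2)).1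
        obtain ⟨t, ht, ht2, hreach⟩ := IH.2 hc1
        by_cases hat : a = t
        · subst hat; exact hreach
        · exact (SimpleGraph.Adj.reachable
            (by exact hclq ⟨ha.2, ha2⟩ ⟨ht.2, ht2⟩ hat :
              (G.induce (B ∩ V₁)).Adj ⟨a, ha⟩ ⟨t, ht⟩)).trans hreach
    · intro ha1
      by_cases hc1 : c ∈ V₁
      · have hc2 : c ∈ V₂ := ((hsplit a c h).resolve_left (fun q => ha1 q.1)).2
        exact ⟨c, ⟨hcB, hc1⟩, hc2, IH.1 ⟨hcB, hc1⟩⟩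
      · exact IH.2 hc1

end Helpers

private lemma joinSide {V : Type} [Fintype V] (G : SimpleGraph V) (l : ℕ)
    (hconn : LConnected G l) {V₁ V₂ T : Set V} (hI : V₁ ∩ V₂ = T)
    (hsplit : ∀ u w, G.Adj u w → (u ∈ V₁ ∧ w ∈ V₁) ∨ (u ∈ V₂ ∧ w ∈ V₂))
    (hclqI : G.IsClique (V₁ ∩ V₂))
    (hlT : l ≤ T.ncard) (hss : T ⊂ V₁) : LConnected (G.induce V₁) l := by
  obtain ⟨a0, ha0, _⟩ := Set.exists_of_ssubset hss
  haveI : Nonempty ↥V₁ := ⟨⟨a0, ha0⟩⟩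
  refine ⟨⟨?_⟩, ?_, ?_⟩
  · intro x y
    obtain ⟨p⟩ := hconn.1.preconnected x.1 y.1
    have H := (reroute2 hsplit hclqI p (fun z _ => Set.mem_univ z)
      ⟨Set.mem_univ _, y.2⟩).1 ⟨Set.mem_univ _, x.2⟩
    exact H.map (indHom G Set.inter_subset_right)
  · have h1 : T.ncard < V₁.ncard := Set.ncard_lt_ncard hss V₁.toFinite
    rw [Nat.card_coe_set_eq]
    omega
  · intro S hS
    set S' : Set V := Subtype.val '' S with hS'def
    have hncard : S'.ncard = S.ncard := Set.ncard_image_of_injective S Subtype.val_injective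
    have hcut' : IsVertexCut G S' := by
      intro hpre
      apply hS
      intro x y
      have hx' : x.1.1 ∈ S'ᶜ := by
        rintro ⟨z, hz, hzv⟩
        exact x.2 (by rwa [Subtype.val_injective hzv] at hz)
      have hy' : y.1.1 ∈ S'ᶜ := by
        rintro ⟨z, hz, hzv⟩
        exact y.2 (by rwa [Subtype.val_injective hzv] at hz)
      obtain ⟨p⟩ := hpre ⟨x.1.1, hx'⟩ ⟨y.1.1, hy'⟩
      have hsupp : ∀ z ∈ (p.map (indHomV G S'ᶜ)).support, z ∈ S'ᶜ := by
        intro z hz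
        rw [SimpleGraph.Walk.support_map] at hz
        obtain ⟨w, _, rfl⟩ := List.mem_map.mp hz
        exact w.2
      have H := (reroute2 hsplit hclqI (p.map (indHomV G S'ᶜ)) hsupp
        ⟨hy', y.1.2⟩).1 ⟨hx', x.1.2⟩
      let f : G.induce (S'ᶜ ∩ V₁) →g (G.induce V₁).induce Sᶜ :=
        ⟨fun z => ⟨⟨z.1, z.2.2⟩, fun hmem => z.2.1 ⟨⟨z.1, z.2.2⟩, hmem, rfl⟩⟩,
          fun {_ _} had => had⟩
      exact H.map f
    have := hconn.2.2 S' hcut'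
    omega

/-- for an `l`-connected chordal graph `G` and a clique `T ≠ V(G)`:
(i) if `(G,T)` is obtained from `(G−v, T∖{v})` by an introduce operation, then
`|T| ≥ l+1` and `G−v` is `l`-connected; (ii) if `(G,T)` is obtained from `(G₁,T)` and
`(G₂,T)` by a join operation, then `|T| ≥ l` and `G₁` and `G₂` are `l`-connected. -/
theorem statement_10 {V : Type} [Fintype V] [DecidableEq V] (G : SimpleGraph V)
    (l : ℕ) (hl : 1 ≤ l) (hconn : LConnected G l) (hchord : Chordal G)
    (T : Set V) (hT : G.IsClique T) (hTne : T ≠ Set.univ) :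
    (∀ v : V, v ∈ T → (∀ u : V, G.Adj v u → u ∈ T) →
      l + 1 ≤ T.ncard ∧ LConnected (G.induce (delSet v)) l) ∧
    (∀ V₁ V₂ : Set V, V₁ ∩ V₂ = T → V₁ ∪ V₂ = Set.univ → V₁ ≠ T → V₂ ≠ T →
      (∀ u w : V, G.Adj u w → (u ∈ V₁ ∧ w ∈ V₁) ∨ (u ∈ V₂ ∧ w ∈ V₂)) →
      l ≤ T.ncard ∧ LConnected (G.induce V₁) l ∧ LConnected (G.induce V₂) l) := by
  constructor
  · intro v hvT hN
    have hclqv : ∀ x y, G.Adj v x → G.Adj v y → x ≠ y → G.Adj x y :=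
      fun x y hx hy hxy => hT (hN x hx) (hN y hy) hxy
    obtain ⟨u, _, hu⟩ := Set.exists_of_ssubset (Set.ssubset_univ_iff.mpr hTne)
    have huv : u ≠ v := fun e => hu (by rw [e]; exact hvT)
    have hvdel : v ∉ delSet v := fun h => h rfl
    have hNcut : IsVertexCut G {x | G.Adj v x} := by
      intro hpre
      have hv : v ∈ {x | G.Adj v x}ᶜ := fun h => G.loopless.irrefl v h
      have hu' : u ∈ {x | G.Adj v x}ᶜ := fun h => hu (hN u h)
      obtain ⟨p⟩ := hpre ⟨v, hv⟩ ⟨u, hu'⟩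
      cases p with
      | nil => exact huv rfl
      | @cons _ c _ h q => exact c.2 h
    have hlN : l ≤ {x | G.Adj v x}.ncard := hconn.2.2 _ hNcut
    have hvN : v ∉ {x | G.Adj v x} := fun h => G.loopless.irrefl v h
    have hins : insert v {x | G.Adj v x} ⊆ T :=
      Set.insert_subset hvT (fun x hx => hN x hx)
    have hTcard : l + 1 ≤ T.ncard := by
      have h1 := Set.ncard_insert_of_notMem hvN (Set.toFinite _)
      have h2 := Set.ncard_le_ncard hins T.toFinite
      omega
    haveI : Nonempty ↥(delSet v) := ⟨⟨u, huv⟩⟩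
    refine ⟨hTcard, ⟨?_⟩, ?_, ?_⟩
    · intro x y
      obtain ⟨p⟩ := hconn.1.preconnected x.1 y.1
      exact (reroute1 hclqv hvdel p (fun z _ => ne_or_eq z v) y.2).1 x.2
    · have hTuniv : T.ncard < Nat.card V := by
        rw [← Set.ncard_univ]
        exact Set.ncard_lt_ncard (Set.ssubset_univ_iff.mpr hTne) (Set.toFinite _)
      have hdel : (delSet v).ncard + 1 = Nat.card V := by
        have h := Set.ncard_add_ncard_compl ({v} : Set V)
        have h2 : (Set.univ : Set V).ncard = Nat.card V := Set.ncard_univ V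
        rw [Set.ncard_singleton] at h
        have he : delSet v = ({v} : Set V)ᶜ := by ext z; simp [delSet]
        rw [he]
        omega
      rw [Nat.card_coe_set_eq]
      omega
    · intro S hS
      set S' : Set V := Subtype.val '' S with hS'def
      have hncard : S'.ncard = S.ncard := Set.ncard_image_of_injective S Subtype.val_injective
      have hcut' : IsVertexCut G S' := by
        intro hpre
        apply hS
        intro x y
        have hx' : x.1.1 ∈ S'ᶜ := by
          rintro ⟨z, hz, hzv⟩
          exact x.2 (by rwa [Subtype.val_injective hzv] at hz)
        have hy' : y.1.1 ∈ S'ᶜ := by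
          rintro ⟨z, hz, hzv⟩
          exact y.2 (by rwa [Subtype.val_injective hzv] at hz)
        obtain ⟨p⟩ := hpre ⟨x.1.1, hx'⟩ ⟨y.1.1, hy'⟩
        have hvB : v ∉ S'ᶜ ∩ delSet v := fun h => h.2 rfl
        have hsupp : ∀ z ∈ (p.map (indHomV G S'ᶜ)).support,
            z ∈ S'ᶜ ∩ delSet v ∨ z = v := by
          intro z hz
          rw [SimpleGraph.Walk.support_map] at hz
          obtain ⟨w, _, rfl⟩ := List.mem_map.mp hz
          by_cases hzv : w.1 = v
          · exact Or.inr hzv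
          · exact Or.inl ⟨w.2, hzv⟩
        have H := (reroute1 hclqv hvB (p.map (indHomV G S'ᶜ)) hsupp
          ⟨hy', y.1.2⟩).1 ⟨hx', x.1.2⟩
        let f : G.induce (S'ᶜ ∩ delSet v) →g (G.induce (delSet v)).induce Sᶜ :=
          ⟨fun z => ⟨⟨z.1, z.2.2⟩, fun hmem => z.2.1 ⟨⟨z.1, z.2.2⟩, hmem, rfl⟩⟩,
            fun {_ _} had => had⟩
        exact H.map f
      have := hconn.2.2 S' hcut'
      omega
  · intro V₁ V₂ hI hU h1 h2 hsplit
    have hclqI : G.IsClique (V₁ ∩ V₂) := by rw [hI]; exact hT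
    have hT1 : T ⊆ V₁ := by rw [← hI]; exact Set.inter_subset_left
    have hT2 : T ⊆ V₂ := by rw [← hI]; exact Set.inter_subset_right
    obtain ⟨a, haV, haT⟩ := Set.exists_of_ssubset (ssubset_of_subset_of_ne hT1 (Ne.symm h1))
    obtain ⟨b, hbV, hbT⟩ := Set.exists_of_ssubset (ssubset_of_subset_of_ne hT2 (Ne.symm h2))
    have hb1 : b ∉ V₁ := fun h => hbT (by rw [← hI]; exact ⟨h, hbV⟩)
    have hTcut : IsVertexCut G T := by
      intro hpre
      obtain ⟨p⟩ := hpre ⟨b, hbT⟩ ⟨a, haT⟩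
      have hsupp : ∀ z ∈ (p.map (indHomV G Tᶜ)).support, z ∈ Tᶜ := by
        intro z hz
        rw [SimpleGraph.Walk.support_map] at hz
        obtain ⟨w, _, rfl⟩ := List.mem_map.mp hz
        exact w.2
      obtain ⟨t, ht, ht2, _⟩ := (reroute2 hsplit hclqI (p.map (indHomV G Tᶜ)) hsupp
        ⟨haT, haV⟩).2 hb1
      exact ht.1 (by rw [← hI]; exact ⟨ht.2, ht2⟩)
    have hlT : l ≤ T.ncard := hconn.2.2 T hTcut
    have hsplit' : ∀ u w, G.Adj u w → (u ∈ V₂ ∧ w ∈ V₂) ∨ (u ∈ V₁ ∧ w ∈ V₁) :=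
      fun u w h => (hsplit u w h).symm
    have hI' : V₂ ∩ V₁ = T := by rw [Set.inter_comm]; exact hI
    exact ⟨hlT,
      joinSide G l hconn hI hsplit hclqI hlT (ssubset_of_subset_of_ne hT1 (Ne.symm h1)),
      joinSide G l hconn hI' hsplit' (by rw [Set.inter_comm]; exact hclqI) hlT
        (ssubset_of_subset_of_ne hT2 (Ne.symm h2))⟩
end
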